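/- There exists u* with P(u*) > 0 such that F is strictly decreasing on the interval ((1+√21)/4, u*) and strictly increasing on (u*, ∞); consequently F attains a global minimum F* = F(u*) on the set {u > 0 : P(u) > 0}, and F* > 0. -/

import Mathlib

open Real Finset

/-- Auxiliary polynomial for the N = 3 institutional reward case: `P(u) = 4u² − 2u − 5`
(whose unique positive root is `(1+√21)/4`). -/
noncomputable def Pfun (u : ℝ) : ℝ := 4 * u ^ 2 - 2 * u - 5

/-- Auxiliary function for the N = 3 institutional reward case:
`F(u) = (u+1)(5u+4)(u²+u+1)/(u(4u²−2u−5)) − log u`. -/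
noncomputable def Ffun (u : ℝ) : ℝ :=
  (u + 1) * (5 * u + 4) * (u ^ 2 + u + 1) / (u * (4 * u ^ 2 - 2 * u - 5)) - Real.log u

/-- `F* = inf {F(u) : u > 0, P(u) > 0}`. -/
noncomputable def Fstar : ℝ := sInf {y : ℝ | ∃ u : ℝ, 0 < u ∧ 0 < Pfun u ∧ y = Ffun u}

noncomputable def Q1 (u : ℝ) : ℝ :=
  20*u^6 - 36*u^5 - 159*u^4 - 208*u^3 - 132*u^2 - 9*u + 20

lemma sqrt21_gt_4 : (4:ℝ) < Real.sqrt 21 := by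
  nlinarith [Real.sq_sqrt (by norm_num : (21:ℝ) ≥ 0), Real.sqrt_nonneg (21:ℝ)]

lemma root_lt {u : ℝ} (hu : 0 < u) (hP : 0 < 4*u^2 - 2*u - 5) :
    (1 + Real.sqrt 21) / 4 < u := by
  have h := Real.sq_sqrt (by norm_num : (21:ℝ) ≥ 0)
  have h0 := Real.sqrt_nonneg (21:ℝ)
  nlinarith [sq_nonneg (4*u - 1 - Real.sqrt 21), sq_nonneg (4*u - 1 + Real.sqrt 21)]

lemma lt_root {u : ℝ} (hu : (1 + Real.sqrt 21) / 4 < u) : 0 < 4*u^2 - 2*u - 5 := by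
  have h := Real.sq_sqrt (by norm_num : (21:ℝ) ≥ 0)
  have h0 := sqrt21_gt_4
  nlinarith [sq_nonneg (4*u - 1 - Real.sqrt 21)]

lemma root_pos {u : ℝ} (hu : (1 + Real.sqrt 21) / 4 < u) : 1 < u := by
  have h0 := sqrt21_gt_4
  nlinarith

lemma root_lt_4 : (1 + Real.sqrt 21) / 4 < 4 := by
  have h := Real.sq_sqrt (by norm_num : (21:ℝ) ≥ 0)
  have h0 := Real.sqrt_nonneg (21:ℝ)
  nlinarith

lemma Q1_neg {u : ℝ} (h1 : 1 ≤ u) (h4 : u ≤ 4) : Q1 u < 0 := by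
  unfold Q1
  nlinarith [sq_nonneg u, mul_pos (mul_pos (by linarith : (0:ℝ) < u) (by linarith : (0:ℝ) < u))
    (by linarith : (0:ℝ) < u), sq_nonneg (u-1), sq_nonneg (4-u),
    mul_nonneg (mul_nonneg (by linarith : (0:ℝ) ≤ u-1) (by linarith : (0:ℝ) ≤ 4-u)) (sq_nonneg u),
    sq_nonneg (6*u - 13),
    mul_nonneg (mul_nonneg (mul_nonneg (by linarith : (0:ℝ) ≤ 4-u) (by linarith : (0:ℝ) ≤ u))
      (by linarith : (0:ℝ) ≤ u)) (mul_nonneg (by linarith : (0:ℝ) ≤ u) (by linarith : (0:ℝ) ≤ u))]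

lemma Q1'_pos {u : ℝ} (h : 4 < u) :
    0 < 120*u^5 - 180*u^4 - 636*u^3 - 624*u^2 - 264*u - 9 := by
  nlinarith [mul_pos (by linarith : (0:ℝ) < u) (by linarith : (0:ℝ) < u),
    mul_pos (mul_pos (by linarith : (0:ℝ) < u) (by linarith : (0:ℝ) < u)) (by linarith : (0:ℝ) < u),
    mul_nonneg (mul_nonneg (by linarith : (0:ℝ) ≤ u-4) (by linarith : (0:ℝ) ≤ u))
      (mul_nonneg (by linarith : (0:ℝ) ≤ u) (mul_nonneg (by linarith : (0:ℝ) ≤ u)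
        (by linarith : (0:ℝ) ≤ u)))]

lemma Q1_hasDeriv (u : ℝ) :
    HasDerivAt Q1 (120*u^5 - 180*u^4 - 636*u^3 - 624*u^2 - 264*u - 9) u := by
  have h : HasDerivAt (fun x : ℝ => 20*x^6 - 36*x^5 - 159*x^4 - 208*x^3 - 132*x^2 - 9*x + 20)
      (120*u^5 - 180*u^4 - 636*u^3 - 624*u^2 - 264*u - 9) u := by
    have := (((((((hasDerivAt_pow 6 u).const_mul 20).sub ((hasDerivAt_pow 5 u).const_mul 36)).sub
      ((hasDerivAt_pow 4 u).const_mul 159)).sub ((hasDerivAt_pow 3 u).const_mul 208)).sub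
      ((hasDerivAt_pow 2 u).const_mul 132)).sub ((hasDerivAt_id u).const_mul 9)).add_const 20
    refine this.congr_deriv ?_
    push_cast [id_eq]
    ring
  exact h

lemma Q1_cont : Continuous Q1 := by
  unfold Q1; continuity

lemma Q1_strictMono : StrictMonoOn Q1 (Set.Ici (4:ℝ)) := by
  apply strictMonoOn_of_deriv_pos (convex_Ici 4) Q1_cont.continuousOn
  intro u hu
  rw [interior_Ici] at hu
  rw [(Q1_hasDeriv u).deriv]
  exact Q1'_pos hu

lemma Ffun_hasDeriv {u : ℝ} (hu : 0 < u) (hP : 0 < 4*u^2 - 2*u - 5) :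
    HasDerivAt Ffun (Q1 u / (u * (4*u^2 - 2*u - 5))^2) u := by
  have hD : u * (4*u^2 - 2*u - 5) ≠ 0 := by positivity
  have hN : HasDerivAt (fun x : ℝ => (x + 1) * (5*x + 4) * (x^2 + x + 1))
      (20*u^3 + 42*u^2 + 36*u + 13) u := by
    have := (((hasDerivAt_id u).add_const 1).mul (((hasDerivAt_id u).const_mul 5).add_const 4)).mul
      (((hasDerivAt_pow 2 u).add (hasDerivAt_id u)).add_const 1)
    refine this.congr_deriv ?_
    simp only [id_eq, Pi.add_apply, Pi.mul_apply, Pi.sub_apply]; push_cast [id_eq]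
    ring
  have hDd : HasDerivAt (fun x : ℝ => x * (4*x^2 - 2*x - 5))
      (12*u^2 - 4*u - 5) u := by
    have := (hasDerivAt_id u).mul ((((hasDerivAt_pow 2 u).const_mul 4).sub
      ((hasDerivAt_id u).const_mul 2)).sub_const 5)
    refine this.congr_deriv ?_
    simp only [id_eq, Pi.add_apply, Pi.mul_apply, Pi.sub_apply]; push_cast [id_eq]
    ring
  have hdiv := hN.div hDd hD
  have hlog := Real.hasDerivAt_log hu.ne'
  have h := hdiv.sub hlog
  have heq : Ffun = fun x : ℝ =>
      (x + 1) * (5*x + 4) * (x^2 + x + 1) / (x * (4*x^2 - 2*x - 5)) - Real.log x := by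
    funext x; simp [Ffun]
  rw [heq]
  refine h.congr_deriv ?_
  unfold Q1
  have hu0 : u ≠ 0 := hu.ne'
  have hP0 : 4*u^2 - 2*u - 5 ≠ 0 := hP.ne'
  field_simp
  have hsq : (u * (u * 4 - 2) - 5) ^ 2 ≠ 0 := pow_ne_zero 2 (by intro h0; apply hP0; linear_combination h0)
  rw [eq_div_iff hsq, sub_mul, div_mul_cancel₀ _ hsq]
  ring

/-- There exists u* with P(u*) > 0 such that F is strictly decreasing on
((1+√21)/4, u*) and strictly increasing on (u*, ∞); consequently F attains a global minimum
F* = F(u*) on the set {u > 0 : P(u) > 0}, and F* > 0. -/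
theorem Ffun_attains_positive_minimum :
    ∃ ustar : ℝ, 0 < ustar ∧ 0 < Pfun ustar ∧
      StrictAntiOn Ffun (Set.Ioo ((1 + Real.sqrt 21) / 4) ustar) ∧
      StrictMonoOn Ffun (Set.Ioi ustar) ∧
      (∀ u : ℝ, 0 < u → 0 < Pfun u → Ffun ustar ≤ Ffun u) ∧
      Fstar = Ffun ustar ∧
      0 < Fstar := by
  set r : ℝ := (1 + Real.sqrt 21) / 4 with hr
  -- find the root of Q1 in (4,5)
  have hQ4 : Q1 4 < 0 := by unfold Q1; norm_num
  have hQ5 : 0 < Q1 5 := by unfold Q1; norm_num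
  have hiv : Set.Ioo (Q1 4) (Q1 5) ⊆ Q1 '' Set.Ioo 4 5 :=
    intermediate_value_Ioo (by norm_num) Q1_cont.continuousOn
  obtain ⟨w, hw45, hw0⟩ := hiv ⟨hQ4, hQ5⟩
  obtain ⟨hw4, hw5⟩ := hw45
  have hr4 : r < 4 := root_lt_4
  have hrw : r < w := lt_trans hr4 hw4
  have hw0' : 0 < w := by linarith [root_pos hrw]
  -- sign of Q1
  have hQneg : ∀ u : ℝ, r < u → u < w → Q1 u < 0 := by
    intro u hru huw
    rcases le_or_gt u 4 with h | h
    · exact Q1_neg (le_of_lt (root_pos hru)) h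
    · have := Q1_strictMono (le_of_lt h) (le_of_lt hw4) huw
      rw [hw0] at this; linarith
  have hQpos : ∀ u : ℝ, w < u → 0 < Q1 u := by
    intro u hwu
    have := Q1_strictMono (le_of_lt hw4) (by simp; linarith) hwu
    rw [hw0] at this; linarith
  -- derivative sign of Ffun
  have hderiv : ∀ u : ℝ, r < u → deriv Ffun u = Q1 u / (u * (4*u^2 - 2*u - 5))^2 := by
    intro u hru
    exact (Ffun_hasDeriv (by linarith [root_pos hru]) (lt_root hru)).deriv
  have hdiff : ∀ u : ℝ, r < u → DifferentiableAt ℝ Ffun u := by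
    intro u hru
    exact (Ffun_hasDeriv (by linarith [root_pos hru]) (lt_root hru)).differentiableAt
  have hcont1 : ContinuousOn Ffun (Set.Ioc r w) := fun u hu =>
    ((hdiff u hu.1).continuousAt).continuousWithinAt
  have hcont2 : ContinuousOn Ffun (Set.Ici w) := fun u hu =>
    ((hdiff u (lt_of_lt_of_le hrw hu)).continuousAt).continuousWithinAt
  have hDen : ∀ u : ℝ, r < u → 0 < (u * (4*u^2 - 2*u - 5))^2 := by
    intro u hru
    have h1 : 0 < u := by linarith [root_pos hru]
    have h2 := lt_root hru
    positivity
  -- strict anti on Ioc r w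
  have hanti : StrictAntiOn Ffun (Set.Ioc r w) := by
    apply strictAntiOn_of_deriv_neg (convex_Ioc r w) hcont1
    intro u hu
    rw [interior_Ioc] at hu
    rw [hderiv u hu.1]
    exact div_neg_of_neg_of_pos (hQneg u hu.1 hu.2) (hDen u hu.1)
  -- strict mono on Ici w
  have hmono : StrictMonoOn Ffun (Set.Ici w) := by
    apply strictMonoOn_of_deriv_pos (convex_Ici w) hcont2
    intro u hu
    rw [interior_Ici] at hu
    rw [hderiv u (lt_trans hrw hu)]
    exact div_pos (hQpos u hu) (hDen u (lt_trans hrw hu))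
  -- global minimum
  have hmin : ∀ u : ℝ, 0 < u → 0 < Pfun u → Ffun w ≤ Ffun u := by
    intro u hu hP
    have hru : r < u := root_lt hu hP
    rcases lt_trichotomy u w with h | h | h
    · exact le_of_lt (hanti ⟨hru, le_of_lt h⟩ ⟨hrw, le_refl w⟩ h)
    · rw [h]
    · exact le_of_lt (hmono (le_refl w) (le_of_lt h) h)
  have hPw : 0 < Pfun w := by unfold Pfun; exact lt_root hrw
  have hmem : Ffun w ∈ {y : ℝ | ∃ u : ℝ, 0 < u ∧ 0 < Pfun u ∧ y = Ffun u} :=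
    ⟨w, hw0', hPw, rfl⟩
  have hFstar : Fstar = Ffun w := by
    apply IsLeast.csInf_eq
    constructor
    · exact hmem
    · rintro y ⟨u, hu, hP, rfl⟩
      exact hmin u hu hP
  -- positivity of Ffun w
  have hFpos : 0 < Ffun w := by
    unfold Ffun
    have hNlb : (2520:ℝ) ≤ (w + 1) * (5 * w + 4) * (w ^ 2 + w + 1) := by
      have h1 : (5:ℝ) ≤ w + 1 := by linarith
      have h2 : (24:ℝ) ≤ 5 * w + 4 := by linarith
      have h3 : (21:ℝ) ≤ w ^ 2 + w + 1 := by nlinarith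
      calc (2520:ℝ) = 5 * 24 * 21 := by norm_num
        _ ≤ (w + 1) * (5 * w + 4) * (w ^ 2 + w + 1) := by
            apply mul_le_mul (mul_le_mul h1 h2 (by norm_num) (by linarith)) h3 (by norm_num)
            positivity
    have hDub : w * (4 * w ^ 2 - 2 * w - 5) ≤ 425 := by nlinarith
    have hDpos : 0 < w * (4 * w ^ 2 - 2 * w - 5) := by
      have := lt_root hrw; positivity
    have hlog : Real.log w < w - 1 := Real.log_lt_sub_one_of_pos hw0' (by linarith)
    have hq : (2520:ℝ)/425 ≤ (w + 1) * (5 * w + 4) * (w ^ 2 + w + 1) / (w * (4 * w ^ 2 - 2 * w - 5)) := by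
      rw [div_le_div_iff₀ (by norm_num) hDpos]
      nlinarith
    have : Real.log w < 4 := by linarith
    linarith [hq]
  refine ⟨w, hw0', hPw, hanti.mono ?_, hmono.mono Set.Ioi_subset_Ici_self, hmin, hFstar, hFstar ▸ hFpos⟩
  intro x hx
  exact ⟨hx.1, le_of_lt hx.2⟩
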